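/- Let Ŝ be a singular symmetric positive semidefinite d×d real matrix with kernel of dimension m ≥ 1, let P be the orthogonal projection onto ker Ŝ, and for t > 0 set S(t) = Ŝ + tP. Then for every symmetric positive definite d×d matrix Σ and every t > 0: √λ_min(Σ) · m · √t ≤ Tr((S(t)^{1/2} Σ S(t)^{1/2})^{1/2}) − Tr((Ŝ^{1/2} Σ Ŝ^{1/2})^{1/2}) ≤ √λ_max(Σ) · m · √t. -/

import Mathlib

open Matrix BigOperators Finset
open scoped Classical

/-- Unique positive semidefinite square root of a positive semidefinite matrix
(and junk value `0` on other matrices). -/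
noncomputable def msqrt {d : ℕ} (M : Matrix (Fin d) (Fin d) ℝ) :
    Matrix (Fin d) (Fin d) ℝ :=
  if h : M.PosSemidef then
    (h.1.eigenvectorUnitary : Matrix (Fin d) (Fin d) ℝ) * diagonal (Real.sqrt ∘ h.1.eigenvalues) *
      (star h.1.eigenvectorUnitary : Matrix (Fin d) (Fin d) ℝ)
  else 0

/-- Smallest eigenvalue of a symmetric matrix (junk value `0` otherwise). -/
noncomputable def lmin {d : ℕ} (M : Matrix (Fin d) (Fin d) ℝ) : ℝ :=
  if h : M.IsHermitian then ⨅ i, h.eigenvalues i else 0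

/-- Largest eigenvalue of a symmetric matrix (junk value `0` otherwise). -/
noncomputable def lmax {d : ℕ} (M : Matrix (Fin d) (Fin d) ℝ) : ℝ :=
  if h : M.IsHermitian then ⨆ i, h.eigenvalues i else 0

/-- Squared Bures–Wasserstein distance. -/
noncomputable def W2sq {d : ℕ} (A B : Matrix (Fin d) (Fin d) ℝ) : ℝ :=
  A.trace + B.trace - 2 * (msqrt (msqrt A * B * msqrt A)).trace

/-- The conditional barycenter objective `F`. -/
noncomputable def Fobj {d n : ℕ} (Sig : Fin n → Matrix (Fin d) (Fin d) ℝ)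
    (lam : Fin n → ℝ) (S : Matrix (Fin d) (Fin d) ℝ) : ℝ :=
  ∑ k, lam k * W2sq S (Sig k)

/-- Geometric mean `GM(S⁻¹, Σ) = S^{-1/2} (S^{1/2} Σ S^{1/2})^{1/2} S^{-1/2}`. -/
noncomputable def GMinv {d : ℕ} (S Sigma : Matrix (Fin d) (Fin d) ℝ) :
    Matrix (Fin d) (Fin d) ℝ :=
  (msqrt S)⁻¹ * msqrt (msqrt S * Sigma * msqrt S) * (msqrt S)⁻¹

/-- The Spectral Dominance of Positive Weights condition. -/
def SDPW {d n : ℕ} (Sig : Fin n → Matrix (Fin d) (Fin d) ℝ) (lam : Fin n → ℝ) : Prop :=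
  ∑ j ∈ Finset.univ.filter (fun k => lam k < 0), (-lam j) * Real.sqrt (lmax (Sig j))
    < ∑ i ∈ Finset.univ.filter (fun k => 0 < lam k), lam i * Real.sqrt (lmin (Sig i))

section Aux
variable {d : ℕ} {M B U : Matrix (Fin d) (Fin d) ℝ}

lemma herm_transpose (h : M.IsHermitian) : Mᵀ = M := by
  rw [← conjTranspose_eq_transpose_of_trivial]; exact h

open scoped MatrixOrder in
lemma msqrt_of (h : M.PosSemidef) : msqrt M = CFC.sqrt M := by
  rw [CFC.sqrt_eq_real_sqrt M h.nonneg, cfcₙ_eq_cfc (hf0 := Real.sqrt_zero), h.1.cfc_eq, IsHermitian.cfc,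
    Unitary.conjStarAlgAut_apply]
  unfold msqrt; rw [dif_pos h]; rfl

open scoped MatrixOrder in
lemma msqrt_posSemidef (h : M.PosSemidef) : (msqrt M).PosSemidef := by
  rw [msqrt_of h]; exact (CFC.sqrt_nonneg M).posSemidef

open scoped MatrixOrder in
lemma msqrt_mul_self (h : M.PosSemidef) : msqrt M * msqrt M = M := by
  rw [msqrt_of h]; exact CFC.sqrt_mul_sqrt_self M h.nonneg

lemma msqrt_transpose (h : M.PosSemidef) : (msqrt M)ᵀ = msqrt M :=
  herm_transpose (msqrt_posSemidef h).1

lemma msqrt_conjTranspose (h : M.PosSemidef) : (msqrt M)ᴴ = msqrt M :=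
  (msqrt_posSemidef h).1

open scoped MatrixOrder in
lemma msqrt_eq (hB : B.PosSemidef) (hM : B * B = M) : msqrt M = B := by
  have hMp : M.PosSemidef := by rw [← hM, ← pow_two]; exact hB.pow 2
  rw [msqrt_of hMp]
  exact (CFC.sqrt_eq_iff M B hMp.nonneg hB.nonneg).mpr hM

lemma posDef_of_posSemidef_isUnit (h : M.PosSemidef) (hU : IsUnit M) : M.PosDef := by
  refine PosDef.of_dotProduct_mulVec_pos h.1 fun x hx => ?_
  refine (h.dotProduct_mulVec_nonneg x).lt_of_ne' fun h0 => hx ?_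
  have h1 : M *ᵥ x = 0 := (h.dotProduct_mulVec_zero_iff x).mp h0
  have h2 := Matrix.mulVec_injective_iff_isUnit.mpr hU
  have : M *ᵥ x = M *ᵥ 0 := by simpa using h1
  exact h2 this

lemma msqrt_posDef (h : M.PosDef) : (msqrt M).PosDef := by
  have hp := msqrt_posSemidef h.posSemidef
  refine posDef_of_posSemidef_isUnit hp ?_
  have hd : (msqrt M).det * (msqrt M).det = M.det := by
    rw [← det_mul, msqrt_mul_self h.posSemidef]
  have : (msqrt M).det ≠ 0 := by
    intro h0; rw [h0, mul_zero] at hd; exact (h.det_pos).ne (hd)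
  exact (Matrix.isUnit_iff_isUnit_det _).mpr this.isUnit

lemma psd_smul {c : ℝ} (h : M.PosSemidef) (hc : 0 ≤ c) : (c • M).PosSemidef := by
  refine PosSemidef.of_dotProduct_mulVec_nonneg ?_ ?_
  · unfold Matrix.IsHermitian
    rw [conjTranspose_smul]
    simp only [star_trivial]
    rw [conjTranspose_eq_transpose_of_trivial, herm_transpose h.1]
  · intro x
    rw [smul_mulVec, dotProduct_smul]
    exact mul_nonneg hc (h.dotProduct_mulVec_nonneg x)

lemma psd_of_symm_idem (hs : Mᵀ = M) (hi : M * M = M) : M.PosSemidef := by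
  have : Mᴴ * M = M := by
    rw [conjTranspose_eq_transpose_of_trivial, hs, hi]
  rw [← this]
  exact posSemidef_conjTranspose_mul_self M

lemma trace_psd_nonneg (h : M.PosSemidef) : 0 ≤ M.trace := by
  rw [Matrix.trace]
  refine Finset.sum_nonneg fun i _ => ?_
  have := h.dotProduct_mulVec_nonneg (Pi.single i 1)
  simpa [Matrix.mulVec_single, dotProduct, Pi.single_apply, Matrix.diag] using this

lemma trace_mul_psd_nonneg {A : Matrix (Fin d) (Fin d) ℝ}
    (hA : A.PosSemidef) (hB : B.PosSemidef) : 0 ≤ (A * B).trace := by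
  have h1 : (msqrt A * B * (msqrt A)ᴴ).PosSemidef := hB.mul_mul_conjTranspose_same (msqrt A)
  rw [msqrt_conjTranspose hA] at h1
  have h2 : (A * B).trace = (msqrt A * B * msqrt A).trace := by
    conv_lhs => rw [← msqrt_mul_self hA]
    rw [Matrix.mul_assoc, Matrix.trace_mul_comm]
  rw [h2]
  exact trace_psd_nonneg h1

lemma pd_psd_add_smul_one (h : M.PosSemidef) {ε : ℝ} (hε : 0 < ε) :
    (M + ε • (1 : Matrix (Fin d) (Fin d) ℝ)).PosDef := by
  refine PosDef.of_dotProduct_mulVec_pos (h.add (psd_smul Matrix.PosSemidef.one hε.le)).1 fun x hx => ?_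
  have h1 : star x ⬝ᵥ ((M + ε • (1 : Matrix (Fin d) (Fin d) ℝ)) *ᵥ x)
      = star x ⬝ᵥ (M *ᵥ x) + ε * (star x ⬝ᵥ x) := by
    rw [add_mulVec, dotProduct_add, smul_mulVec, one_mulVec, dotProduct_smul,
      smul_eq_mul]
  rw [h1]
  have h2 : 0 < star x ⬝ᵥ x := dotProduct_star_self_pos_iff.mpr hx
  have := h.dotProduct_mulVec_nonneg x
  nlinarith

lemma trace_UB_le (B U : Matrix (Fin d) (Fin d) ℝ)
    (hU : ((1 : Matrix (Fin d) (Fin d) ℝ) - Uᵀ * U).PosSemidef) :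
    (Uᵀ * B).trace ≤ (msqrt (Bᵀ * B)).trace := by
  have hBtB : (Bᵀ * B).PosSemidef := by
    have := posSemidef_conjTranspose_mul_self B
    rwa [conjTranspose_eq_transpose_of_trivial] at this
  set H := msqrt (Bᵀ * B) with hHdef
  have hH : H.PosSemidef := msqrt_posSemidef hBtB
  have hHH : H * H = Bᵀ * B := msqrt_mul_self hBtB
  have key : ∀ ε : ℝ, 0 < ε →
      2 * (Uᵀ * B).trace ≤ 2 * H.trace + ε * d := by
    intro ε hε
    set M := H + ε • (1 : Matrix (Fin d) (Fin d) ℝ) with hMdef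
    have hMpd : M.PosDef := pd_psd_add_smul_one hH hε
    have hMps : M.PosSemidef := hMpd.posSemidef
    set R := msqrt M with hRdef
    have hRpd : R.PosDef := msqrt_posDef hMpd
    have hRR : R * R = M := msqrt_mul_self hMps
    have hRt : Rᵀ = R := msqrt_transpose hMps
    have hRiR : R⁻¹ * R = 1 := nonsing_inv_mul _ hRpd.det_pos.ne'.isUnit
    have hRRi : R * R⁻¹ = 1 := mul_nonsing_inv _ hRpd.det_pos.ne'.isUnit
    have hRit : (R⁻¹)ᵀ = R⁻¹ := by rw [transpose_nonsing_inv, hRt]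
    have hMinv : R⁻¹ * R⁻¹ = M⁻¹ := by rw [← hRR, Matrix.mul_inv_rev]
    have hMMi : M * M⁻¹ = 1 := mul_nonsing_inv _ hMpd.det_pos.ne'.isUnit
    have hK : ((B * R⁻¹ - U * R) * (B * R⁻¹ - U * R)ᵀ).PosSemidef := by
      have := posSemidef_self_mul_conjTranspose (B * R⁻¹ - U * R)
      rwa [conjTranspose_eq_transpose_of_trivial] at this
    have hexp : (B * R⁻¹ - U * R) * (B * R⁻¹ - U * R)ᵀ
        = B * M⁻¹ * Bᵀ - B * Uᵀ - U * Bᵀ + U * M * Uᵀ := by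
      have e0 : (B * R⁻¹ - U * R) * (B * R⁻¹ - U * R)ᵀ
          = (B * R⁻¹ - U * R) * (R⁻¹ * Bᵀ - R * Uᵀ) := by
        rw [transpose_sub, transpose_mul, transpose_mul, hRit, hRt]
      have e1 : (B * R⁻¹ - U * R) * (R⁻¹ * Bᵀ - R * Uᵀ)
          = B * (R⁻¹ * R⁻¹) * Bᵀ - B * (R⁻¹ * R) * Uᵀ - U * (R * R⁻¹) * Bᵀ
            + U * (R * R) * Uᵀ := by noncomm_ring
      rw [e0, e1, hMinv, hRiR, hRRi, hRR, Matrix.mul_one, Matrix.mul_one]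
    have htr0 : 0 ≤ (B * M⁻¹ * Bᵀ).trace - (B * Uᵀ).trace - (U * Bᵀ).trace
        + (U * M * Uᵀ).trace := by
      have := trace_psd_nonneg hK
      rwa [hexp, Matrix.trace_add, Matrix.trace_sub, Matrix.trace_sub] at this
    have htr1 : (B * Uᵀ).trace = (Uᵀ * B).trace := Matrix.trace_mul_comm _ _
    have htr2 : (U * Bᵀ).trace = (Uᵀ * B).trace := by
      rw [Matrix.trace_mul_comm, ← Matrix.trace_transpose (Uᵀ * B), transpose_mul,
        transpose_transpose]
    have htr3 : (B * M⁻¹ * Bᵀ).trace = (H * H * M⁻¹).trace := by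
      rw [Matrix.trace_mul_cycle, hHH]
    have htr4 : (U * M * Uᵀ).trace = (Uᵀ * U * M).trace := by
      rw [Matrix.trace_mul_cycle]
    -- bound Tr(UᵀU M) ≤ Tr M
    have hb1 : ((Uᵀ * U) * M).trace ≤ M.trace := by
      have h0 : 0 ≤ (((1 : Matrix (Fin d) (Fin d) ℝ) - Uᵀ * U) * M).trace :=
        trace_mul_psd_nonneg hU hMps
      rw [Matrix.sub_mul, Matrix.one_mul, Matrix.trace_sub] at h0
      linarith
    -- Tr M⁻¹ ≤ ε⁻¹ d
    have hRMR : R⁻¹ * M * R⁻¹ = 1 := by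
      rw [← hRR, ← Matrix.mul_assoc, hRiR, Matrix.one_mul, hRRi]
    have hb2 : (M⁻¹).trace ≤ ε⁻¹ * d := by
      have h0 : (ε⁻¹ • H).PosSemidef := psd_smul hH (by positivity)
      have h1 := h0.mul_mul_conjTranspose_same R⁻¹
      rw [conjTranspose_eq_transpose_of_trivial, hRit] at h1
      have h2 : R⁻¹ * (ε⁻¹ • H) * R⁻¹
          = ε⁻¹ • (1 : Matrix (Fin d) (Fin d) ℝ) - M⁻¹ := by
        have hHM : H = M - ε • (1 : Matrix (Fin d) (Fin d) ℝ) := by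
          rw [hMdef]; abel
        rw [hHM, smul_sub, smul_smul, inv_mul_cancel₀ hε.ne', one_smul]
        rw [Matrix.mul_sub, Matrix.sub_mul, Matrix.mul_smul, Matrix.smul_mul, hRMR,
          Matrix.mul_one, hMinv]
      rw [h2] at h1
      have h3 := trace_psd_nonneg h1
      rw [Matrix.trace_sub, Matrix.trace_smul, Matrix.trace_one] at h3
      simp only [smul_eq_mul, Fintype.card_fin] at h3
      linarith
    have hMtr : M.trace = H.trace + ε * d := by
      rw [hMdef, Matrix.trace_add, Matrix.trace_smul, Matrix.trace_one]
      simp [Fintype.card_fin]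
    have hb3 : (H * H * M⁻¹).trace ≤ M.trace - 2 * ε * d + ε * ε * (M⁻¹).trace := by
      have e2 : H * H = M * M - (2 * ε) • M + (ε * ε) • (1 : Matrix (Fin d) (Fin d) ℝ) := by
        have hHM : H = M - ε • (1 : Matrix (Fin d) (Fin d) ℝ) := by rw [hMdef]; abel
        rw [hHM]
        simp only [Matrix.sub_mul, Matrix.mul_sub, Matrix.mul_smul, Matrix.smul_mul,
          Matrix.mul_one, Matrix.one_mul, smul_smul]
        module
      have e3 : H * H * M⁻¹ = M * (M * M⁻¹) - (2 * ε) • (M * M⁻¹) + (ε * ε) • M⁻¹ := by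
        rw [e2, Matrix.add_mul, Matrix.sub_mul, Matrix.smul_mul, Matrix.smul_mul,
          Matrix.mul_assoc, Matrix.one_mul]
      rw [e3, hMMi, Matrix.mul_one, Matrix.trace_add, Matrix.trace_sub,
        Matrix.trace_smul, Matrix.trace_smul, Matrix.trace_one]
      simp [Fintype.card_fin]
    have hb4 : ε * ε * (M⁻¹).trace ≤ ε * d := by
      calc ε * ε * (M⁻¹).trace ≤ ε * ε * (ε⁻¹ * d) := by
            apply mul_le_mul_of_nonneg_left hb2 (by positivity)
        _ = ε * d := by field_simp
    nlinarith [htr0, htr1, htr2, htr3, htr4, hb1, hb3, hb4, hMtr]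
  -- conclude by letting ε → 0
  by_contra hcon
  push_neg at hcon
  set δ := (Uᵀ * B).trace - H.trace with hδ
  have hδpos : 0 < δ := by simp [hδ]; linarith
  have := key (δ / (d + 1)) (by positivity)
  have hle : (δ / (d + 1)) * d ≤ δ := by
    rw [div_mul_eq_mul_div, div_le_iff₀ (by positivity)]
    nlinarith
  simp only [hδ] at hle this
  linarith

end Aux

section Fcal
variable {d : ℕ} {M : Matrix (Fin d) (Fin d) ℝ}

/-- Functional calculus associated to a fixed spectral decomposition. -/
noncomputable def fcal (hM : M.IsHermitian) (f : ℝ → ℝ) : Matrix (Fin d) (Fin d) ℝ :=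
  (hM.eigenvectorUnitary : Matrix (Fin d) (Fin d) ℝ) * Matrix.diagonal (f ∘ hM.eigenvalues) *
    star (hM.eigenvectorUnitary : Matrix (Fin d) (Fin d) ℝ)

lemma V_mul_star (hM : M.IsHermitian) :
    (hM.eigenvectorUnitary : Matrix (Fin d) (Fin d) ℝ) *
      star (hM.eigenvectorUnitary : Matrix (Fin d) (Fin d) ℝ) = 1 :=
  Matrix.mem_unitaryGroup_iff.mp hM.eigenvectorUnitary.2

lemma star_mul_V (hM : M.IsHermitian) :
    star (hM.eigenvectorUnitary : Matrix (Fin d) (Fin d) ℝ) *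
      (hM.eigenvectorUnitary : Matrix (Fin d) (Fin d) ℝ) = 1 :=
  Matrix.mem_unitaryGroup_iff'.mp hM.eigenvectorUnitary.2

lemma fcal_mul (hM : M.IsHermitian) (f g : ℝ → ℝ) :
    fcal hM f * fcal hM g = fcal hM (fun x => f x * g x) := by
  unfold fcal
  set V := (hM.eigenvectorUnitary : Matrix (Fin d) (Fin d) ℝ)
  have : V * Matrix.diagonal (f ∘ hM.eigenvalues) * star V *
      (V * Matrix.diagonal (g ∘ hM.eigenvalues) * star V)
      = V * (Matrix.diagonal (f ∘ hM.eigenvalues) * (star V * V) *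
          Matrix.diagonal (g ∘ hM.eigenvalues)) * star V := by
    simp only [Matrix.mul_assoc]
  rw [this, star_mul_V hM, Matrix.mul_one, diagonal_mul_diagonal]
  rfl

lemma fcal_congr (hM : M.IsHermitian) {f g : ℝ → ℝ}
    (h : ∀ i, f (hM.eigenvalues i) = g (hM.eigenvalues i)) : fcal hM f = fcal hM g := by
  unfold fcal
  have hfg : (f ∘ hM.eigenvalues) = (g ∘ hM.eigenvalues) := funext h
  rw [hfg]

lemma fcal_id (hM : M.IsHermitian) : fcal hM id = M := by
  conv_rhs => rw [hM.spectral_theorem]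
  unfold fcal
  have : (RCLike.ofReal ∘ hM.eigenvalues : Fin d → ℝ) = (id ∘ hM.eigenvalues) := by
    funext i
    simp [RCLike.ofReal_real_eq_id]
  rw [this]
  rfl

lemma fcal_trace (hM : M.IsHermitian) (f : ℝ → ℝ) :
    (fcal hM f).trace = ∑ i, f (hM.eigenvalues i) := by
  unfold fcal
  rw [Matrix.trace_mul_cycle, star_mul_V hM, Matrix.one_mul, Matrix.trace_diagonal]
  rfl

lemma fcal_isHermitian (hM : M.IsHermitian) (f : ℝ → ℝ) : (fcal hM f).IsHermitian := by
  unfold fcal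
  set V := (hM.eigenvectorUnitary : Matrix (Fin d) (Fin d) ℝ)
  unfold Matrix.IsHermitian
  rw [Matrix.star_eq_conjTranspose, conjTranspose_mul, conjTranspose_mul,
    conjTranspose_conjTranspose, diagonal_conjTranspose]
  simp only [star_trivial, Matrix.mul_assoc]

lemma fcal_transpose (hM : M.IsHermitian) (f : ℝ → ℝ) : (fcal hM f)ᵀ = fcal hM f :=
  herm_transpose (fcal_isHermitian hM f)

lemma fcal_posSemidef (hM : M.IsHermitian) (f : ℝ → ℝ)
    (h : ∀ i, 0 ≤ f (hM.eigenvalues i)) : (fcal hM f).PosSemidef := by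
  have hd : (Matrix.diagonal (f ∘ hM.eigenvalues)).PosSemidef :=
    Matrix.PosSemidef.diagonal fun i => h i
  have := hd.mul_mul_conjTranspose_same (hM.eigenvectorUnitary : Matrix (Fin d) (Fin d) ℝ)
  rwa [← Matrix.star_eq_conjTranspose] at this

lemma fcal_smul (hM : M.IsHermitian) (c : ℝ) (f : ℝ → ℝ) :
    c • fcal hM f = fcal hM (fun x => c * f x) := by
  unfold fcal
  have h1 : Matrix.diagonal ((fun x => c * f x) ∘ hM.eigenvalues)
      = c • Matrix.diagonal (f ∘ hM.eigenvalues) := diagonal_smul c (f ∘ hM.eigenvalues)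
  rw [h1, Matrix.mul_smul, Matrix.smul_mul]

lemma fcal_sub (hM : M.IsHermitian) (f g : ℝ → ℝ) :
    fcal hM f - fcal hM g = fcal hM (fun x => f x - g x) := by
  have h1 : Matrix.diagonal ((fun x => f x - g x) ∘ hM.eigenvalues)
      = Matrix.diagonal (f ∘ hM.eigenvalues) - Matrix.diagonal (g ∘ hM.eigenvalues) :=
    (diagonal_sub _ _).symm
  unfold fcal
  rw [h1, Matrix.mul_sub, Matrix.sub_mul]

lemma fcal_one (hM : M.IsHermitian) : fcal hM (fun _ => 1) = 1 := by
  unfold fcal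
  rw [show (Matrix.diagonal ((fun _ => (1:ℝ)) ∘ hM.eigenvalues)) = 1 from diagonal_one,
    Matrix.mul_one, V_mul_star hM]

lemma msqrt_fcal (hM : M.PosSemidef) : msqrt M = fcal hM.1 Real.sqrt := by
  refine msqrt_eq (fcal_posSemidef _ _ fun i => Real.sqrt_nonneg _) ?_
  rw [fcal_mul,
    fcal_congr hM.1 (f := fun x => Real.sqrt x * Real.sqrt x) (g := id)
      (fun i => Real.mul_self_sqrt (hM.eigenvalues_nonneg i)), fcal_id]

lemma trace_msqrt_eq (hM : M.PosSemidef) :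
    (msqrt M).trace = ∑ i, Real.sqrt (hM.1.eigenvalues i) := by
  rw [msqrt_fcal hM, fcal_trace]

end Fcal

section Spec
variable {d : ℕ} {M Y Q : Matrix (Fin d) (Fin d) ℝ} {c : ℝ}

lemma psd_smul_one_sub (hM : M.IsHermitian) (h : ∀ i, hM.eigenvalues i ≤ c) :
    (c • (1 : Matrix (Fin d) (Fin d) ℝ) - M).PosSemidef := by
  have e : c • (1 : Matrix (Fin d) (Fin d) ℝ) - M = fcal hM (fun x => c * 1 - id x) := by
    rw [← fcal_sub, ← fcal_smul, fcal_one, fcal_id]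
  rw [e]
  refine fcal_posSemidef _ _ fun i => ?_
  have := h i
  simp only [id_eq, mul_one]
  linarith

lemma psd_sub_smul_one (hM : M.IsHermitian) (h : ∀ i, c ≤ hM.eigenvalues i) :
    (M - c • (1 : Matrix (Fin d) (Fin d) ℝ)).PosSemidef := by
  have e : M - c • (1 : Matrix (Fin d) (Fin d) ℝ) = fcal hM (fun x => id x - c * 1) := by
    rw [← fcal_sub, ← fcal_smul, fcal_one, fcal_id]
  rw [e]
  refine fcal_posSemidef _ _ fun i => ?_
  have := h i
  simp only [id_eq, mul_one]
  linarith

lemma eigenvectorBasis_ne_zero (hY : Y.IsHermitian) (i : Fin d) :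
    (⇑(hY.eigenvectorBasis i) : Fin d → ℝ) ≠ 0 := by
  intro h0
  have := hY.eigenvectorBasis.orthonormal.ne_zero i
  apply this
  ext j
  exact congrFun h0 j

lemma eig_le_of_psd (hY : Y.IsHermitian)
    (h : (c • (1 : Matrix (Fin d) (Fin d) ℝ) - Y).PosSemidef) (i : Fin d) :
    hY.eigenvalues i ≤ c := by
  set v : Fin d → ℝ := ⇑(hY.eigenvectorBasis i) with hv
  have hmv : Y *ᵥ v = hY.eigenvalues i • v := hY.mulVec_eigenvectorBasis i
  have h2 := h.dotProduct_mulVec_nonneg v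
  rw [sub_mulVec, dotProduct_sub, smul_mulVec, one_mulVec, dotProduct_smul, hmv,
    dotProduct_smul] at h2
  have hpos : 0 < star v ⬝ᵥ v := dotProduct_star_self_pos_iff.mpr (eigenvectorBasis_ne_zero hY i)
  simp only [smul_eq_mul] at h2
  nlinarith

lemma eig_idem_zero_or_one (hQ : Q.IsHermitian) (hQi : Q * Q = Q) (i : Fin d) :
    hQ.eigenvalues i = 0 ∨ hQ.eigenvalues i = 1 := by
  set v : Fin d → ℝ := ⇑(hQ.eigenvectorBasis i) with hv
  have hmv : Q *ᵥ v = hQ.eigenvalues i • v := hQ.mulVec_eigenvectorBasis i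
  have h1 : Q *ᵥ (Q *ᵥ v) = (hQ.eigenvalues i * hQ.eigenvalues i) • v := by
    rw [hmv, mulVec_smul, hmv, smul_smul]
  rw [mulVec_mulVec, hQi, hmv] at h1
  have h2 : (hQ.eigenvalues i - hQ.eigenvalues i * hQ.eigenvalues i) • v = 0 := by
    rw [sub_smul, h1, sub_self]
  rcases smul_eq_zero.mp h2 with h3 | h3
  · rcases mul_eq_zero.mp (show hQ.eigenvalues i * (1 - hQ.eigenvalues i) = 0 by nlinarith) with
      h4 | h4
    · exact Or.inl h4
    · right; linarith
  · exact absurd h3 (eigenvectorBasis_ne_zero hQ i)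

lemma trace_idem_eq_rank (hQs : Qᵀ = Q) (hQi : Q * Q = Q) : Q.trace = (Q.rank : ℝ) := by
  have hQ : Q.IsHermitian := by
    rw [Matrix.IsHermitian, conjTranspose_eq_transpose_of_trivial, hQs]
  have htr : Q.trace = ∑ i, hQ.eigenvalues i := by
    conv_lhs => rw [← fcal_id hQ]
    exact fcal_trace hQ id
  rw [htr, hQ.rank_eq_card_non_zero_eigs, Fintype.card_subtype]
  have hsplit : ∑ i, hQ.eigenvalues i
      = ∑ i ∈ Finset.univ.filter (fun i => hQ.eigenvalues i ≠ 0), hQ.eigenvalues i :=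
    (Finset.sum_filter_of_ne fun i _ h => h).symm
  rw [hsplit]
  have h1 : ∀ i ∈ Finset.univ.filter (fun i => hQ.eigenvalues i ≠ 0),
      hQ.eigenvalues i = 1 := by
    intro i hi
    rcases eig_idem_zero_or_one hQ hQi i with h | h
    · rw [Finset.mem_filter] at hi
      exact absurd h hi.2
    · exact h
  rw [Finset.sum_congr rfl h1, Finset.sum_const, nsmul_eq_mul, mul_one]

lemma inv_eq_fcal (hM : M.PosDef) : M⁻¹ = fcal hM.1 (fun x => x⁻¹) := by
  apply Matrix.inv_eq_left_inv
  calc fcal hM.1 (fun x => x⁻¹) * M = fcal hM.1 (fun x => x⁻¹) * fcal hM.1 id := by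
        rw [fcal_id]
    _ = fcal hM.1 (fun x => x⁻¹ * id x) := fcal_mul _ _ _
    _ = fcal hM.1 (fun _ => 1) := fcal_congr _ fun i => by
        field_simp [(hM.eigenvalues_pos i).ne']
        rfl
    _ = 1 := fcal_one _

end Spec

/-- two-sided bound on the increment of `Tr((S(t)^(1/2) Σ S(t)^(1/2))^(1/2))`
along the perturbation `S(t) = Ŝ + t P` of a singular PSD matrix by the orthogonal
projection `P` onto its kernel, whose dimension is `m ≥ 1`. -/
theorem stmt5 {d m : ℕ} (Shat P : Matrix (Fin d) (Fin d) ℝ)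
    (hShat : Shat.PosSemidef)
    (hm : m = Module.finrank ℝ (LinearMap.ker Shat.mulVecLin)) (hm1 : 1 ≤ m)
    (hPsymm : Pᵀ = P) (hPidem : P * P = P)
    (hPrange : ∀ x : Fin d → ℝ, P.mulVec x = x ↔ Shat.mulVec x = 0) :
    ∀ (Sigma : Matrix (Fin d) (Fin d) ℝ), Sigma.PosDef → ∀ t : ℝ, 0 < t →
      Real.sqrt (lmin Sigma) * (m : ℝ) * Real.sqrt t ≤
          (msqrt (msqrt (Shat + t • P) * Sigma * msqrt (Shat + t • P))).trace
            - (msqrt (msqrt Shat * Sigma * msqrt Shat)).trace ∧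
        (msqrt (msqrt (Shat + t • P) * Sigma * msqrt (Shat + t • P))).trace
            - (msqrt (msqrt Shat * Sigma * msqrt Shat)).trace ≤
          Real.sqrt (lmax Sigma) * (m : ℝ) * Real.sqrt t := by
  intro Sigma hSig t ht
  -- dimension positivity
  have hdim : 0 < d := by
    rcases Nat.eq_zero_or_pos d with h0 | h
    · exfalso
      have h1 : Module.finrank ℝ (LinearMap.ker Shat.mulVecLin)
          ≤ Module.finrank ℝ (Fin d → ℝ) := Submodule.finrank_le _
      rw [Module.finrank_pi, Fintype.card_fin] at h1
      omega
    · exact h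
  haveI : Nonempty (Fin d) := Fin.pos_iff_nonempty.mp hdim
  set SQ := msqrt Shat with hSQdef
  have hSQps : SQ.PosSemidef := msqrt_posSemidef hShat
  have hSQ2 : SQ * SQ = Shat := msqrt_mul_self hShat
  have hSQt : SQᵀ = SQ := msqrt_transpose hShat
  have hSQc : SQᴴ = SQ := msqrt_conjTranspose hShat
  have hker : ∀ w : Fin d → ℝ, Shat *ᵥ w = 0 → SQ *ᵥ w = 0 := by
    intro w hw
    have h3 : star (SQ *ᵥ w) ⬝ᵥ (SQ *ᵥ w) = star w ⬝ᵥ (SQ *ᵥ (SQ *ᵥ w)) := by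
      rw [star_mulVec, hSQc, ← dotProduct_mulVec]
    have h4 : SQ *ᵥ (SQ *ᵥ w) = 0 := by rw [mulVec_mulVec, hSQ2, hw]
    have h1 : star (SQ *ᵥ w) ⬝ᵥ (SQ *ᵥ w) = 0 := by rw [h3, h4, dotProduct_zero]
    exact dotProduct_star_self_eq_zero.mp h1
  have hcol : ∀ (A : Matrix (Fin d) (Fin d) ℝ), (∀ v, A *ᵥ v = 0) → A = 0 := by
    intro A hA
    ext i j
    have := congrFun (hA (Pi.single j 1)) i
    simpa [Matrix.mulVec_single] using this
  have hSQP : SQ * P = 0 := by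
    apply hcol; intro v
    rw [← mulVec_mulVec]
    apply hker
    have hPP : P *ᵥ (P *ᵥ v) = P *ᵥ v := by rw [mulVec_mulVec, hPidem]
    exact (hPrange _).mp hPP
  have hPSQ : P * SQ = 0 := by
    have := congrArg Matrix.transpose hSQP
    rwa [transpose_mul, hSQt, hPsymm, transpose_zero] at this
  have hPps : P.PosSemidef := psd_of_symm_idem hPsymm hPidem
  set st := Real.sqrt t with hstdef
  have hst : st * st = t := Real.mul_self_sqrt ht.le
  have hstpos : 0 < st := Real.sqrt_pos.mpr ht
  set A' := SQ + st • P with hA'def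
  have hA'ps : A'.PosSemidef := hSQps.add (psd_smul hPps hstpos.le)
  have hA'2 : A' * A' = Shat + t • P := by
    rw [hA'def]
    simp only [Matrix.add_mul, Matrix.mul_add, Matrix.smul_mul, Matrix.mul_smul, hSQ2, hSQP,
      hPSQ, hPidem, smul_zero, smul_smul, hst, add_zero, zero_add]
  have hmsqSt : msqrt (Shat + t • P) = A' := msqrt_eq hA'ps hA'2
  have hA't : A'ᵀ = A' := herm_transpose hA'ps.1
  have hA'pd : A'.PosDef := by
    refine PosDef.of_dotProduct_mulVec_pos hA'ps.1 fun x hx => ?_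
    have hval : star x ⬝ᵥ (A' *ᵥ x)
        = star x ⬝ᵥ (SQ *ᵥ x) + st * (star x ⬝ᵥ (P *ᵥ x)) := by
      rw [hA'def, add_mulVec, dotProduct_add, smul_mulVec, dotProduct_smul, smul_eq_mul]
    rcases eq_or_lt_of_le (hSQps.dotProduct_mulVec_nonneg x) with h0 | h0
    · have h1 : SQ *ᵥ x = 0 := (hSQps.dotProduct_mulVec_zero_iff x).mp h0.symm
      have h2 : Shat *ᵥ x = 0 := by rw [← hSQ2, ← mulVec_mulVec, h1, mulVec_zero]
      have h3 : P *ᵥ x = x := (hPrange x).mpr h2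
      have h4 : 0 < star x ⬝ᵥ x := dotProduct_star_self_pos_iff.mpr hx
      rw [hval, h3, ← h0]
      nlinarith
    · rw [hval]
      have := hPps.dotProduct_mulVec_nonneg x
      nlinarith
  set W := msqrt Sigma with hWdef
  have hWpd : W.PosDef := msqrt_posDef hSig
  have hW2 : W * W = Sigma := msqrt_mul_self hSig.posSemidef
  have hWt : Wᵀ = W := msqrt_transpose hSig.posSemidef
  have hWiW : W⁻¹ * W = 1 := nonsing_inv_mul _ hWpd.det_pos.ne'.isUnit
  have hWWi : W * W⁻¹ = 1 := mul_nonsing_inv _ hWpd.det_pos.ne'.isUnit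
  have hWit : (W⁻¹)ᵀ = W⁻¹ := by rw [transpose_nonsing_inv, hWt]
  have hWiWi : W⁻¹ * W⁻¹ = Sigma⁻¹ := by rw [← hW2, Matrix.mul_inv_rev]
  have hSigh : Sigma.IsHermitian := hSig.1
  have hlmin_eq : lmin Sigma = ⨅ i, hSigh.eigenvalues i := dif_pos hSigh
  have hlmax_eq : lmax Sigma = ⨆ i, hSigh.eigenvalues i := dif_pos hSigh
  have hlmin_le : ∀ i, lmin Sigma ≤ hSigh.eigenvalues i := fun i => by
    rw [hlmin_eq]; exact ciInf_le (Finite.bddBelow_range _) i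
  have hle_lmax : ∀ i, hSigh.eigenvalues i ≤ lmax Sigma := fun i => by
    rw [hlmax_eq]; exact le_ciSup (Finite.bddAbove_range _) i
  have hlmin_pos : 0 < lmin Sigma := by
    obtain ⟨j, hj⟩ := exists_eq_ciInf_of_finite (f := hSigh.eigenvalues)
    rw [hlmin_eq, ← hj]
    exact hSig.eigenvalues_pos j
  have hlmax_pos : 0 < lmax Sigma := by
    obtain ⟨i0⟩ := (inferInstance : Nonempty (Fin d))
    exact lt_of_lt_of_le hlmin_pos ((hlmin_le i0).trans (hle_lmax i0))
  -- X0 and spectral calculus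
  have hX0ps : (SQ * (Sigma * SQ)).PosSemidef := by
    have := hSig.posSemidef.mul_mul_conjTranspose_same SQ
    rw [hSQc] at this
    simpa only [Matrix.mul_assoc] using this
  have hX0h : (SQ * (Sigma * SQ)).IsHermitian := hX0ps.1
  have hX0t : (SQ * (Sigma * SQ))ᵀ = SQ * (Sigma * SQ) := herm_transpose hX0h
  have hX0P : (SQ * (Sigma * SQ)) * P = 0 := by
    rw [Matrix.mul_assoc, Matrix.mul_assoc, hSQP, Matrix.mul_zero, Matrix.mul_zero]
  have hPX0 : P * (SQ * (Sigma * SQ)) = 0 := by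
    rw [← Matrix.mul_assoc, hPSQ, Matrix.zero_mul]
  set G := fcal hX0h (fun x => (Real.sqrt x)⁻¹) with hGdef
  set Pi0 := fcal hX0h (fun x => x * x⁻¹) with hPi0def
  have hGt : Gᵀ = G := fcal_transpose _ _
  have hPi0t : Pi0ᵀ = Pi0 := fcal_transpose _ _
  have eignn : ∀ i, 0 ≤ hX0h.eigenvalues i := hX0ps.eigenvalues_nonneg
  have hGX0 : G * (SQ * (Sigma * SQ)) = msqrt (SQ * (Sigma * SQ)) := by
    have h0 : G * fcal hX0h id = fcal hX0h Real.sqrt := by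
      rw [hGdef, fcal_mul]
      refine fcal_congr _ fun i => ?_
      rcases eq_or_ne (hX0h.eigenvalues i) 0 with h | h
      · rw [h]; simp
      · have hpos : 0 < hX0h.eigenvalues i := lt_of_le_of_ne (eignn i) (Ne.symm h)
        have hs : Real.sqrt (hX0h.eigenvalues i) ≠ 0 := (Real.sqrt_pos.mpr hpos).ne'
        field_simp
        rw [id_eq, Real.sq_sqrt hpos.le]
    rw [fcal_id hX0h] at h0
    rw [h0, msqrt_fcal hX0ps]
  have hGfact : G = (SQ * (Sigma * SQ)) * fcal hX0h (fun x => (x * Real.sqrt x)⁻¹) := by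
    have h0 : fcal hX0h id * fcal hX0h (fun x => (x * Real.sqrt x)⁻¹) = G := by
      rw [hGdef, fcal_mul]
      refine fcal_congr _ fun i => ?_
      rcases eq_or_ne (hX0h.eigenvalues i) 0 with h | h
      · rw [h]; simp
      · have hpos : 0 < hX0h.eigenvalues i := lt_of_le_of_ne (eignn i) (Ne.symm h)
        have hs : Real.sqrt (hX0h.eigenvalues i) ≠ 0 := (Real.sqrt_pos.mpr hpos).ne'
        field_simp
        rfl
    rw [fcal_id hX0h] at h0
    exact h0.symm
  have hPG : P * G = 0 := by rw [hGfact, ← Matrix.mul_assoc, hPX0, Matrix.zero_mul]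
  have hGP : G * P = 0 := by
    have := congrArg Matrix.transpose hPG
    rwa [transpose_mul, hGt, hPsymm, transpose_zero] at this
  have hPi0fact : Pi0 = (SQ * (Sigma * SQ)) * fcal hX0h (fun x => x⁻¹) := by
    have h0 : fcal hX0h id * fcal hX0h (fun x => x⁻¹) = Pi0 := by
      rw [hPi0def, fcal_mul]
      exact fcal_congr _ fun i => by simp
    rw [fcal_id hX0h] at h0
    exact h0.symm
  have hPPi0 : P * Pi0 = 0 := by rw [hPi0fact, ← Matrix.mul_assoc, hPX0, Matrix.zero_mul]
  have hPi0P : Pi0 * P = 0 := by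
    have := congrArg Matrix.transpose hPPi0
    rwa [transpose_mul, hPi0t, hPsymm, transpose_zero] at this
  have hGXG : G * (SQ * (Sigma * (SQ * G))) = Pi0 := by
    have h0 : G * fcal hX0h id * G = Pi0 := by
      rw [hGdef, hPi0def, fcal_mul, fcal_mul]
      refine fcal_congr _ fun i => ?_
      rcases eq_or_ne (hX0h.eigenvalues i) 0 with h | h
      · rw [h]; simp
      · have hpos : 0 < hX0h.eigenvalues i := lt_of_le_of_ne (eignn i) (Ne.symm h)
        have hs : Real.sqrt (hX0h.eigenvalues i) ≠ 0 := (Real.sqrt_pos.mpr hpos).ne'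
        have h2 : Real.sqrt (hX0h.eigenvalues i) * Real.sqrt (hX0h.eigenvalues i)
            = hX0h.eigenvalues i := Real.mul_self_sqrt hpos.le
        field_simp
        rw [id_eq, Real.sq_sqrt hpos.le]
    rw [fcal_id hX0h] at h0
    simp only [Matrix.mul_assoc] at h0
    exact h0
  have hPi0idem : Pi0 * Pi0 = Pi0 := by
    rw [hPi0def, fcal_mul]
    refine fcal_congr _ fun i => ?_
    rcases eq_or_ne (hX0h.eigenvalues i) 0 with h | h
    · rw [h]; simp
    · field_simp
  -- trace of P
  have hrange : LinearMap.range P.mulVecLin = LinearMap.ker Shat.mulVecLin := by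
    ext x
    simp only [LinearMap.mem_range, LinearMap.mem_ker, Matrix.mulVecLin_apply]
    constructor
    · rintro ⟨y, rfl⟩
      have : P *ᵥ (P *ᵥ y) = P *ᵥ y := by rw [mulVec_mulVec, hPidem]
      exact (hPrange _).mp this
    · intro hx
      exact ⟨x, (hPrange x).mpr hx⟩
  have hrank : P.rank = m := by rw [Matrix.rank, hrange]; exact hm.symm
  have htrP : P.trace = (m : ℝ) := by rw [trace_idem_eq_rank hPsymm hPidem, hrank]
  -- contextual rewriting rules
  have cWW : ∀ X : Matrix (Fin d) (Fin d) ℝ, W * (W * X) = Sigma * X := fun X => by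
    rw [← Matrix.mul_assoc, hW2]
  have cWiW : ∀ X : Matrix (Fin d) (Fin d) ℝ, W⁻¹ * (W * X) = X := fun X => by
    rw [← Matrix.mul_assoc, hWiW, Matrix.one_mul]
  have cWWi : ∀ X : Matrix (Fin d) (Fin d) ℝ, W * (W⁻¹ * X) = X := fun X => by
    rw [← Matrix.mul_assoc, hWWi, Matrix.one_mul]
  have cWiWi : ∀ X : Matrix (Fin d) (Fin d) ℝ, W⁻¹ * (W⁻¹ * X) = Sigma⁻¹ * X := fun X => by
    rw [← Matrix.mul_assoc, hWiWi]
  have cSQP : ∀ X : Matrix (Fin d) (Fin d) ℝ, SQ * (P * X) = 0 := fun X => by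
    rw [← Matrix.mul_assoc, hSQP, Matrix.zero_mul]
  have cPSQ : ∀ X : Matrix (Fin d) (Fin d) ℝ, P * (SQ * X) = 0 := fun X => by
    rw [← Matrix.mul_assoc, hPSQ, Matrix.zero_mul]
  have cPP : ∀ X : Matrix (Fin d) (Fin d) ℝ, P * (P * X) = P * X := fun X => by
    rw [← Matrix.mul_assoc, hPidem]
  -- the dual certificates
  set c := Real.sqrt (lmin Sigma) with hcdef
  have hc2 : c * c = lmin Sigma := Real.mul_self_sqrt hlmin_pos.le
  set U1 := W * (SQ * G) with hU1def
  set U2 := W⁻¹ * P with hU2def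
  set U := U1 + c • U2 with hUdef
  have hU1t : U1ᵀ = G * (SQ * W) := by
    rw [hU1def, transpose_mul, transpose_mul, hGt, hSQt, hWt, Matrix.mul_assoc]
  have hU2t : U2ᵀ = P * W⁻¹ := by rw [hU2def, transpose_mul, hPsymm, hWit]
  set B := W * A' with hBdef
  have hBtB : Bᵀ * B = A' * (Sigma * A') := by
    rw [hBdef, transpose_mul, hA't, hWt, Matrix.mul_assoc, cWW, ← Matrix.mul_assoc,
      Matrix.mul_assoc]
  have hBsplit : B = W * SQ + st • (W * P) := by
    rw [hBdef, hA'def, Matrix.mul_add, Matrix.mul_smul]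
  -- UᵀU
  have hUtU : Uᵀ * U = Pi0 + (c * c) • (P * (Sigma⁻¹ * P)) := by
    rw [hUdef, transpose_add, transpose_smul, hU1t, hU2t, hU1def, hU2def]
    simp only [Matrix.add_mul, Matrix.mul_add, Matrix.smul_mul, Matrix.mul_smul, smul_smul,
      Matrix.mul_assoc, cWW, cWiW, cWWi, cWiWi, cSQP, cPSQ, cPP, hSQP, hPSQ, hW2, hWiW,
      hWWi, hWiWi, hPidem, Matrix.mul_zero, Matrix.zero_mul, smul_zero, add_zero, zero_add,
      Matrix.mul_one, Matrix.one_mul, hGXG]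
  have hPinner : ((1 : Matrix (Fin d) (Fin d) ℝ) - lmin Sigma • Sigma⁻¹).PosSemidef := by
    have e : (1 : Matrix (Fin d) (Fin d) ℝ) - lmin Sigma • Sigma⁻¹
        = fcal hSigh (fun x => 1 - lmin Sigma * x⁻¹) := by
      rw [inv_eq_fcal hSig, fcal_smul, ← fcal_one hSigh, fcal_sub]
    rw [e]
    refine fcal_posSemidef _ _ fun i => ?_
    have h1 := hSig.eigenvalues_pos i
    have h2 := hlmin_le i
    have h3 : lmin Sigma * (hSigh.eigenvalues i)⁻¹ ≤ 1 := by
      rw [← div_eq_mul_inv, div_le_one h1]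
      exact h2
    linarith
  have hPconjT : Pᴴ = P := by rw [conjTranspose_eq_transpose_of_trivial, hPsymm]
  have hT2ps : (P - lmin Sigma • (P * (Sigma⁻¹ * P))).PosSemidef := by
    have h1 := hPinner.mul_mul_conjTranspose_same P
    rw [hPconjT] at h1
    have e : P * ((1 : Matrix (Fin d) (Fin d) ℝ) - lmin Sigma • Sigma⁻¹) * P
        = P - lmin Sigma • (P * (Sigma⁻¹ * P)) := by
      simp only [Matrix.mul_sub, Matrix.sub_mul, Matrix.mul_smul, Matrix.smul_mul,
        Matrix.mul_one, Matrix.one_mul, hPidem, Matrix.mul_assoc]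
    rwa [e] at h1
  have hT1ps : ((1 : Matrix (Fin d) (Fin d) ℝ) - Pi0 - P).PosSemidef := by
    apply psd_of_symm_idem
    · rw [transpose_sub, transpose_sub, transpose_one, hPi0t, hPsymm]
    · have e : ((1 : Matrix (Fin d) (Fin d) ℝ) - Pi0 - P)
          * ((1 : Matrix (Fin d) (Fin d) ℝ) - Pi0 - P)
          = 1 - Pi0 - P - Pi0 + Pi0 * Pi0 + Pi0 * P - P + P * Pi0 + P * P := by
        noncomm_ring
      rw [e, hPi0idem, hPi0P, hPPi0, hPidem]
      abel
  have hUpsd : ((1 : Matrix (Fin d) (Fin d) ℝ) - Uᵀ * U).PosSemidef := by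
    have e : (1 : Matrix (Fin d) (Fin d) ℝ) - Uᵀ * U
        = ((1 : Matrix (Fin d) (Fin d) ℝ) - Pi0 - P)
          + (P - lmin Sigma • (P * (Sigma⁻¹ * P))) := by
      rw [hUtU, hc2]
      abel
    rw [e]
    exact hT1ps.add hT2ps
  -- trace of UᵀB
  have hUtB : Uᵀ * B = msqrt (SQ * (Sigma * SQ)) + st • (G * (SQ * (Sigma * P)))
      + (c * st) • P := by
    rw [hUdef, hBsplit, transpose_add, transpose_smul, hU1t, hU2t]
    simp only [Matrix.add_mul, Matrix.mul_add, Matrix.smul_mul, Matrix.mul_smul, smul_smul,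
      Matrix.mul_assoc, cWW, cWiW, cWWi, cWiWi, cSQP, cPSQ, cPP, hSQP, hPSQ, hPidem,
      Matrix.mul_zero, Matrix.zero_mul, smul_zero, add_zero, zero_add, hGX0]
    rw [smul_add, smul_smul, mul_comm st c]
    abel
  have hzero : (G * (SQ * (Sigma * P))).trace = 0 := by
    rw [show G * (SQ * (Sigma * P)) = (G * (SQ * Sigma)) * P from by
      simp only [Matrix.mul_assoc], Matrix.trace_mul_comm, ← Matrix.mul_assoc, hPG,
      Matrix.zero_mul, Matrix.trace_zero]
  have hlowtr : (Uᵀ * B).trace = (msqrt (SQ * (Sigma * SQ))).trace + c * st * m := by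
    rw [hUtB, Matrix.trace_add, Matrix.trace_add, Matrix.trace_smul, Matrix.trace_smul,
      hzero, htrP, smul_eq_mul, smul_eq_mul, mul_zero, add_zero]
  -- upper-bound certificate
  have hASA_ps : (A' * (Sigma * A')).PosSemidef := by
    have := hSig.posSemidef.mul_mul_conjTranspose_same A'
    rw [show A'ᴴ = A' from by rw [conjTranspose_eq_transpose_of_trivial, hA't]] at this
    simpa only [Matrix.mul_assoc] using this
  have hASA_pd : (A' * (Sigma * A')).PosDef := by
    refine posDef_of_posSemidef_isUnit hASA_ps ?_
    exact hA'pd.isUnit.mul (hSig.isUnit.mul hA'pd.isUnit)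
  set H1 := msqrt (A' * (Sigma * A')) with hH1def
  have hH1pd : H1.PosDef := msqrt_posDef hASA_pd
  have hH1sq : H1 * H1 = A' * (Sigma * A') := msqrt_mul_self hASA_pd.posSemidef
  have hH1t : H1ᵀ = H1 := msqrt_transpose hASA_pd.posSemidef
  have hH1iH1 : H1⁻¹ * H1 = 1 := nonsing_inv_mul _ hH1pd.det_pos.ne'.isUnit
  have hH1H1i : H1 * H1⁻¹ = 1 := mul_nonsing_inv _ hH1pd.det_pos.ne'.isUnit
  have hH1it : (H1⁻¹)ᵀ = H1⁻¹ := by rw [transpose_nonsing_inv, hH1t]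
  set Us := B * H1⁻¹ with hUsdef
  have hUst : Usᵀ = H1⁻¹ * Bᵀ := by rw [hUsdef, transpose_mul, hH1it]
  have hUsB : Usᵀ * B = H1 := by
    rw [hUst, Matrix.mul_assoc, hBtB, ← hH1sq, ← Matrix.mul_assoc, hH1iH1, Matrix.one_mul]
  have hUsU : Usᵀ * Us = 1 := by
    have e : Usᵀ * Us = H1⁻¹ * (Bᵀ * B * H1⁻¹) := by
      rw [hUst, hUsdef]
      simp only [Matrix.mul_assoc]
    rw [e, hBtB, ← hH1sq, Matrix.mul_assoc, hH1H1i, Matrix.mul_one, hH1iH1]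
  have hUps0 : ((1 : Matrix (Fin d) (Fin d) ℝ) - Usᵀ * Us).PosSemidef := by
    rw [hUsU, sub_self]
    exact Matrix.PosSemidef.zero
  have hup1 := trace_UB_le (W * SQ) Us hUps0
  have e1 : (W * SQ)ᵀ * (W * SQ) = SQ * (Sigma * SQ) := by
    rw [transpose_mul, hWt, hSQt, Matrix.mul_assoc, cWW]
  rw [e1] at hup1
  have hup2 := trace_UB_le (W * P) Us hUps0
  have e2 : (W * P)ᵀ * (W * P) = P * (Sigma * P) := by
    rw [transpose_mul, hWt, hPsymm, Matrix.mul_assoc, cWW]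
  rw [e2] at hup2
  -- trace msqrt (P Σ P) ≤ m √lmax
  have hYps : (P * (Sigma * P)).PosSemidef := by
    have := hSig.posSemidef.mul_mul_conjTranspose_same P
    rw [hPconjT] at this
    simpa only [Matrix.mul_assoc] using this
  have hYherm : (P * (Sigma * P)).IsHermitian := hYps.1
  have h1Pps : ((1 : Matrix (Fin d) (Fin d) ℝ) - P).PosSemidef := by
    apply psd_of_symm_idem
    · rw [transpose_sub, transpose_one, hPsymm]
    · have e : ((1 : Matrix (Fin d) (Fin d) ℝ) - P) * ((1 : Matrix (Fin d) (Fin d) ℝ) - P)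
          = 1 - P - P + P * P := by noncomm_ring
      rw [e, hPidem]
      abel
  have hYbound : ∀ i, hYherm.eigenvalues i ≤ lmax Sigma := by
    intro i
    apply eig_le_of_psd hYherm
    have hup : ((lmax Sigma) • (1 : Matrix (Fin d) (Fin d) ℝ) - Sigma).PosSemidef :=
      psd_smul_one_sub hSigh hle_lmax
    have e3 : (lmax Sigma) • (1 : Matrix (Fin d) (Fin d) ℝ) - P * (Sigma * P)
        = (lmax Sigma) • ((1 : Matrix (Fin d) (Fin d) ℝ) - P)
          + P * ((lmax Sigma) • (1 : Matrix (Fin d) (Fin d) ℝ) - Sigma) * P := by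
      simp only [Matrix.mul_sub, Matrix.sub_mul, Matrix.mul_smul, Matrix.smul_mul,
        Matrix.mul_one, Matrix.one_mul, smul_sub, hPidem, Matrix.mul_assoc]
      abel
    rw [e3]
    refine (psd_smul h1Pps hlmax_pos.le).add ?_
    have := hup.mul_mul_conjTranspose_same P
    rwa [hPconjT] at this
  have hrankY : (P * (Sigma * P)).rank ≤ m :=
    le_trans (Matrix.rank_mul_le_left _ _) (le_of_eq hrank)
  have htrY : (msqrt (P * (Sigma * P))).trace ≤ (m : ℝ) * Real.sqrt (lmax Sigma) := by
    rw [trace_msqrt_eq hYps]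
    have hs1 : ∑ i, Real.sqrt (hYherm.eigenvalues i)
        = ∑ i ∈ Finset.univ.filter (fun i => hYherm.eigenvalues i ≠ 0),
            Real.sqrt (hYherm.eigenvalues i) := by
      symm
      refine Finset.sum_filter_of_ne fun i _ hne h0 => hne ?_
      rw [h0, Real.sqrt_zero]
    have hs2 : ∑ i ∈ Finset.univ.filter (fun i => hYherm.eigenvalues i ≠ 0),
        Real.sqrt (hYherm.eigenvalues i)
        ≤ (Finset.univ.filter (fun i => hYherm.eigenvalues i ≠ 0)).card
            • Real.sqrt (lmax Sigma) :=
      Finset.sum_le_card_nsmul _ _ _ (fun i _ => Real.sqrt_le_sqrt (hYbound i))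
    have hs3 : (Finset.univ.filter (fun i => hYherm.eigenvalues i ≠ 0)).card ≤ m := by
      calc (Finset.univ.filter (fun i => hYherm.eigenvalues i ≠ 0)).card
          = Fintype.card {i // hYherm.eigenvalues i ≠ 0} := (Fintype.card_subtype _).symm
        _ = (P * (Sigma * P)).rank := hYherm.rank_eq_card_non_zero_eigs.symm
        _ ≤ m := hrankY
    calc ∑ i, Real.sqrt (hYherm.eigenvalues i)
        ≤ (Finset.univ.filter (fun i => hYherm.eigenvalues i ≠ 0)).card
            • Real.sqrt (lmax Sigma) := by rw [hs1]; exact hs2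
      _ = ((Finset.univ.filter (fun i => hYherm.eigenvalues i ≠ 0)).card : ℝ)
            * Real.sqrt (lmax Sigma) := nsmul_eq_mul _ _
      _ ≤ (m : ℝ) * Real.sqrt (lmax Sigma) := by
          refine mul_le_mul_of_nonneg_right ?_ (Real.sqrt_nonneg _)
          exact_mod_cast hs3
  -- final assembly
  rw [hmsqSt]
  simp only [Matrix.mul_assoc]
  constructor
  · -- lower bound
    have hN1 := trace_UB_le B U hUpsd
    rw [hBtB] at hN1
    rw [hlowtr] at hN1
    have heq : Real.sqrt (lmin Sigma) * (m : ℝ) * st = c * st * (m : ℝ) := by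
      rw [hcdef]; ring
    linarith
  · -- upper bound
    have hsplit_tr : (Usᵀ * B).trace
        = (Usᵀ * (W * SQ)).trace + st * (Usᵀ * (W * P)).trace := by
      conv_lhs => rw [hBsplit]
      rw [Matrix.mul_add, Matrix.mul_smul, Matrix.trace_add, Matrix.trace_smul, smul_eq_mul]
    have hE1 : (Usᵀ * B).trace = H1.trace := by rw [hUsB]
    have h2' : st * (Usᵀ * (W * P)).trace ≤ st * ((m : ℝ) * Real.sqrt (lmax Sigma)) :=
      mul_le_mul_of_nonneg_left (le_trans hup2 htrY) hstpos.le
    have heq : Real.sqrt (lmax Sigma) * (m : ℝ) * st = st * ((m : ℝ) * Real.sqrt (lmax Sigma)) := by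
      ring
    linarith
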